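/- arXiv:1003.5313 — 4 statements merged into one kernel-verified Lean document; each statement's English description precedes it below -/
import Mathlib

section
/- The restriction of the action λ to the open subset V₁ = {(x,w,t,s) : s ≠ 0} is free and proper: λ((r,a), v) = v with v ∈ V₁ implies (r,a) = (0,0), and the map ℝ² × V₁ → V₁ × V₁ sending ((r,a), v) to (λ((r,a), v), v) is a proper map (the preimage of every compact set is compact). -/
noncomputable section

/-- The action `λ` of the additive group `ℝ²` on `ℝ × ℂ × ℝ × ℝ`:
`λ((r,a),(x,w,t,s)) = (x + r, w·e^{−ia}, t·e^{a}, s·e^{a})`. -/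
def lamAct (ra : ℝ × ℝ) (v : ℝ × ℂ × ℝ × ℝ) : ℝ × ℂ × ℝ × ℝ :=
  (v.1 + ra.1, v.2.1 * Complex.exp (-(ra.2 : ℂ) * Complex.I),
    v.2.2.1 * Real.exp ra.2, v.2.2.2 * Real.exp ra.2)

/-- `V₁ = {(x,w,t,s) ∈ ℝ × ℂ × ℝ × ℝ : s ≠ 0}`, which is invariant under `λ`. -/
def V1set : Set (ℝ × ℂ × ℝ × ℝ) := {v | v.2.2.2 ≠ 0}

/-- The action `λ` restricted to (the subtype) `V₁`. -/
def lamActV1 (ra : ℝ × ℝ) (v : V1set) : V1set :=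
  ⟨lamAct ra v.val, mul_ne_zero v.prop (Real.exp_ne_zero ra.2)⟩

lemma lamAct_continuous_aux :
    Continuous (fun q : (ℝ × ℝ) × V1set => (lamActV1 q.1 q.2, q.2)) := by
  refine Continuous.prodMk ?_ continuous_snd
  apply Continuous.subtype_mk
  unfold lamAct
  fun_prop

set_option synthInstance.maxHeartbeats 1000000

/-- The restriction of the action `λ` to `V₁` is free and proper:
`λ((r,a), v) = v` with `v ∈ V₁` implies `(r,a) = (0,0)`, and the map
`ℝ² × V₁ → V₁ × V₁, ((r,a), v) ↦ (λ((r,a), v), v)` is continuous and the preimage of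
every compact set is compact. -/
theorem lamAct_free_proper_on_V1 :
    (∀ (ra : ℝ × ℝ) (v : ℝ × ℂ × ℝ × ℝ), v ∈ V1set → lamAct ra v = v → ra = 0) ∧
    Continuous (fun q : (ℝ × ℝ) × V1set => (lamActV1 q.1 q.2, q.2)) ∧
    (∀ K : Set (V1set × V1set), IsCompact K →
      IsCompact ((fun q : (ℝ × ℝ) × V1set => (lamActV1 q.1 q.2, q.2)) ⁻¹' K)) := by
  refine ⟨?_, lamAct_continuous_aux, ?_⟩
  · rintro ⟨r, a⟩ ⟨x, w, t, s⟩ hs h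
    simp only [lamAct, Prod.mk.injEq] at h
    obtain ⟨h1, -, -, h4⟩ := h
    have hr : r = 0 := by linarith
    have ha : a = 0 := by
      have he : Real.exp a = 1 :=
        mul_left_cancel₀ hs (by rw [h4, mul_one])
      have := congrArg Real.log he
      rwa [Real.log_exp, Real.log_one] at this
    simp [hr, ha, Prod.ext_iff]
  · intro K hK
    set F := fun q : (ℝ × ℝ) × V1set => (lamActV1 q.1 q.2, q.2) with hF
    set g : V1set × V1set → (ℝ × ℝ) × V1set :=
      fun p => ((p.1.val.1 - p.2.val.1,
        Real.log (p.1.val.2.2.2 / p.2.val.2.2.2)), p.2) with hg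
    have hgc : Continuous g := by
      refine Continuous.prodMk (Continuous.prodMk ?_ ?_) continuous_snd
      · fun_prop
      · apply Continuous.log
        · exact Continuous.div (by fun_prop) (by fun_prop)
            (fun p => p.2.prop)
        · intro p
          exact div_ne_zero p.1.prop p.2.prop
    have hgF : ∀ q, g (F q) = q := by
      rintro ⟨⟨r, a⟩, v⟩
      have hs := v.prop
      simp only [hg, hF, lamActV1, lamAct]
      have h1 : v.val.1 + r - v.val.1 = r := by ring
      have h2 : v.val.2.2.2 * Real.exp a / v.val.2.2.2 = Real.exp a :=
        mul_div_cancel_left₀ _ hs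
      refine Prod.ext (Prod.ext ?_ ?_) rfl
      · exact h1
      · show Real.log (v.val.2.2.2 * Real.exp a / v.val.2.2.2) = a
        rw [h2, Real.log_exp]
    refine (hK.image hgc).of_isClosed_subset
      (hK.isClosed.preimage lamAct_continuous_aux) ?_
    intro q hq
    exact ⟨F q, hq, hgF q⟩
end
end

section
/- Define q₁ : V₁ → ℂ × ℝ × {−1, 1} by q₁(x, w, t, s) = (w·e^{i·log|s|}, t/|s|, sign(s)). Then q₁ is continuous and surjective, and its fibers are exactly the λ-orbits in V₁: two points v, v' ∈ V₁ satisfy q₁(v) = q₁(v') if and only if v' = λ((r,a), v) for some (r,a) ∈ ℝ². Consequently the leaf space V₁/ℝ² of the restricted foliation is in bijection with ℂ × ℝ × {−1,1} ≅ ℝ³ ⊔ ℝ³. -/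
noncomputable section

/-- `q₁ : V₁ → ℂ × ℝ × ℝ`, `q₁(x,w,t,s) = (w·e^{i·log|s|}, t/|s|, sign s)`
(with third component in `{−1,1}`). -/
def q1 (v : V1set) : ℂ × ℝ × ℝ :=
  ((v : ℝ × ℂ × ℝ × ℝ).2.1 *
      Complex.exp (Complex.I * (Real.log |(v : ℝ × ℂ × ℝ × ℝ).2.2.2| : ℝ)),
    (v : ℝ × ℂ × ℝ × ℝ).2.2.1 / |(v : ℝ × ℂ × ℝ × ℝ).2.2.2|,
    if 0 < (v : ℝ × ℂ × ℝ × ℝ).2.2.2 then 1 else -1)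

lemma sign_eq_div (s : ℝ) (hs : s ≠ 0) : (if 0 < s then (1:ℝ) else -1) = s / |s| := by
  rcases hs.lt_or_gt with h | h
  · rw [if_neg (not_lt.mpr h.le), abs_of_neg h]
    field_simp
  · rw [if_pos h, abs_of_pos h]
    field_simp

lemma q1_cont : Continuous q1 := by
  have hS : Continuous (fun v : V1set => (v : ℝ × ℂ × ℝ × ℝ).2.2.2) :=
    (continuous_subtype_val.snd.snd.snd)
  have hSne : ∀ v : V1set, (v : ℝ × ℂ × ℝ × ℝ).2.2.2 ≠ 0 := fun v => v.2
  have habs : Continuous (fun v : V1set => |(v : ℝ × ℂ × ℝ × ℝ).2.2.2|) := hS.abs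
  have habsne : ∀ v : V1set, |(v : ℝ × ℂ × ℝ × ℝ).2.2.2| ≠ 0 :=
    fun v => abs_ne_zero.mpr (hSne v)
  have hlog : Continuous (fun v : V1set => Real.log |(v : ℝ × ℂ × ℝ × ℝ).2.2.2|) :=
    habs.log habsne
  refine Continuous.prodMk ?_ (Continuous.prodMk ?_ ?_)
  · exact (continuous_subtype_val.snd.fst).mul
      (Complex.continuous_exp.comp (continuous_const.mul (Complex.continuous_ofReal.comp hlog)))
  · exact (continuous_subtype_val.snd.snd.fst).div habs habsne
  · have : (fun v : V1set => if 0 < (v : ℝ × ℂ × ℝ × ℝ).2.2.2 then (1:ℝ) else -1)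
        = fun v : V1set => (v : ℝ × ℂ × ℝ × ℝ).2.2.2 / |(v : ℝ × ℂ × ℝ × ℝ).2.2.2| := by
      funext v; exact sign_eq_div _ (hSne v)
    rw [this]
    exact hS.div habs habsne

lemma q1_fibers (v v' : V1set) : q1 v = q1 v' ↔
    ∃ ra : ℝ × ℝ, lamAct ra (v : ℝ × ℂ × ℝ × ℝ) = (v' : ℝ × ℂ × ℝ × ℝ) := by
  obtain ⟨⟨x, w, t, s⟩, hs⟩ := v
  obtain ⟨⟨x', w', t', s'⟩, hs'⟩ := v'
  simp only [V1set, Set.mem_setOf_eq] at hs hs'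
  have habs : |s| ≠ 0 := abs_ne_zero.mpr hs
  have habs' : |s'| ≠ 0 := abs_ne_zero.mpr hs'
  have habsp : 0 < |s| := abs_pos.mpr hs
  have habsp' : 0 < |s'| := abs_pos.mpr hs'
  constructor
  · intro h
    simp only [q1, Prod.mk.injEq] at h
    obtain ⟨h1, h2, h3⟩ := h
    refine ⟨(x' - x, Real.log |s'| - Real.log |s|), ?_⟩
    have hexp : Real.exp (Real.log |s'| - Real.log |s|) = |s'| / |s| := by
      rw [Real.exp_sub, Real.exp_log habsp', Real.exp_log habsp]
    simp only [lamAct, hexp, Prod.mk.injEq]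
    refine ⟨by ring, ?_, ?_, ?_⟩
    · have hw' : w' = w * Complex.exp (Complex.I * (Real.log |s| : ℝ)) *
          (Complex.exp (Complex.I * (Real.log |s'| : ℝ)))⁻¹ := by
        rw [h1]; field_simp
      rw [hw', ← Complex.exp_neg, mul_assoc, ← Complex.exp_add]
      congr 1
      push_cast
      ring
    · have h2' : t / |s| * |s'| = t' / |s'| * |s'| := by rw [h2]
      field_simp at h2' ⊢
      linarith [h2']
    · rw [sign_eq_div s hs, sign_eq_div s' hs'] at h3
      have h3' : s / |s| * |s'| = s' / |s'| * |s'| := by rw [h3]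
      field_simp at h3' ⊢
      linarith [h3']
  · rintro ⟨⟨r, a⟩, h⟩
    simp only [lamAct, Prod.mk.injEq] at h
    obtain ⟨hx, hw, ht, hS⟩ := h
    have hea : (0:ℝ) < Real.exp a := Real.exp_pos a
    have habs2 : |s * Real.exp a| = |s| * Real.exp a := by
      rw [abs_mul, abs_of_pos hea]
    simp only [q1, ← hS, ← hw, ← ht, habs2, Prod.mk.injEq]
    refine ⟨?_, ?_, ?_⟩
    · rw [Real.log_mul habs (Real.exp_ne_zero a), Real.log_exp, mul_assoc, ← Complex.exp_add]
      congr 2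
      push_cast
      ring
    · rw [eq_comm, mul_comm |s| (Real.exp a), ← div_div, mul_div_assoc,
        div_self (ne_of_gt hea)]
      ring
    · have hpos : (0 < s * Real.exp a) ↔ 0 < s := by
        constructor <;> intro h <;> nlinarith
      simp [hpos]

def q1lift : Quot (fun v v' : V1set =>
      ∃ ra : ℝ × ℝ, lamAct ra (v : ℝ × ℂ × ℝ × ℝ) = (v' : ℝ × ℂ × ℝ × ℝ)) →
    {p : ℂ × ℝ × ℝ // p.2.2 = 1 ∨ p.2.2 = -1} :=
  Quot.lift (fun v => ⟨q1 v, by simp only [q1]; split <;> simp⟩)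
    (fun v v' h => Subtype.ext ((q1_fibers v v').mpr h))

/-- `q₁` is continuous, surjective onto `ℂ × ℝ × {−1,1}`, and its fibers are exactly the
`λ`-orbits in `V₁`; consequently the leaf space `V₁/ℝ²` is in bijection with
`ℂ × ℝ × {−1,1} ≅ ℝ³ ⊔ ℝ³`. -/
theorem q1_classifies_orbits :
    Continuous q1 ∧
    Set.range q1 = {p : ℂ × ℝ × ℝ | p.2.2 = 1 ∨ p.2.2 = -1} ∧
    (∀ v v' : V1set, q1 v = q1 v' ↔
      ∃ ra : ℝ × ℝ, lamAct ra (v : ℝ × ℂ × ℝ × ℝ) = (v' : ℝ × ℂ × ℝ × ℝ)) ∧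
    ∃ e : Quot (fun v v' : V1set =>
          ∃ ra : ℝ × ℝ, lamAct ra (v : ℝ × ℂ × ℝ × ℝ) = (v' : ℝ × ℂ × ℝ × ℝ)) ≃
        {p : ℂ × ℝ × ℝ // p.2.2 = 1 ∨ p.2.2 = -1},
      ∀ v : V1set, (e (Quot.mk _ v) : ℂ × ℝ × ℝ) = q1 v := by
  have hrange : Set.range q1 = {p : ℂ × ℝ × ℝ | p.2.2 = 1 ∨ p.2.2 = -1} := by
    ext p
    constructor
    · rintro ⟨v, rfl⟩
      simp only [q1, Set.mem_setOf_eq]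
      split <;> simp
    · rintro (h | h)
      · refine ⟨⟨⟨0, p.1, p.2.1, 1⟩, one_ne_zero⟩, ?_⟩
        norm_num [q1, Prod.ext_iff]
        exact h.symm
      · refine ⟨⟨⟨0, p.1, p.2.1, -1⟩, by norm_num [V1set]⟩, ?_⟩
        norm_num [q1, Prod.ext_iff]
        exact h.symm
  refine ⟨q1_cont, hrange, q1_fibers, ?_⟩
  have hinj : Function.Injective q1lift := by
    rintro ⟨v⟩ ⟨v'⟩ h
    exact Quot.sound ((q1_fibers v v').mp (congrArg Subtype.val h))
  have hsurj : Function.Surjective q1lift := by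
    rintro ⟨p, hp⟩
    have : p ∈ Set.range q1 := hrange ▸ hp
    obtain ⟨v, hv⟩ := this
    exact ⟨Quot.mk _ v, Subtype.ext hv⟩
  exact ⟨Equiv.ofBijective q1lift ⟨hinj, hsurj⟩, fun v => rfl⟩
end
end

section
/- Define q₂ : V₂ → ℂ × {−1, 1} by q₂(x, w, t, 0) = (w·e^{i·log|t|}, sign(t)). Then q₂ is continuous and surjective, and its fibers are exactly the λ-orbits in V₂: two points v, v' ∈ V₂ satisfy q₂(v) = q₂(v') if and only if v' = λ((r,a), v) for some (r,a) ∈ ℝ². Consequently the leaf space V₂/ℝ² is in bijection with ℂ × {−1,1} ≅ ℝ² ⊔ ℝ². -/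
noncomputable section

/-- `V₂ = {(x,w,t,s) : s = 0 and t ≠ 0}`, which is invariant under `λ`. -/
def V2set : Set (ℝ × ℂ × ℝ × ℝ) := {v | v.2.2.2 = 0 ∧ v.2.2.1 ≠ 0}

/-- `q₂ : V₂ → ℂ × ℝ`, `q₂(x,w,t,0) = (w·e^{i·log|t|}, sign t)`
(with second component in `{−1,1}`). -/
def q2 (v : V2set) : ℂ × ℝ :=
  ((v : ℝ × ℂ × ℝ × ℝ).2.1 *
      Complex.exp (Complex.I * (Real.log |(v : ℝ × ℂ × ℝ × ℝ).2.2.1| : ℝ)),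
    if 0 < (v : ℝ × ℂ × ℝ × ℝ).2.2.1 then 1 else -1)


lemma q2_cont : Continuous q2 := by
  have ht : Continuous (fun v : V2set => (v : ℝ × ℂ × ℝ × ℝ).2.2.1) := by fun_prop
  have htne : ∀ v : V2set, (v : ℝ × ℂ × ℝ × ℝ).2.2.1 ≠ 0 := fun v => v.2.2
  apply Continuous.prodMk
  · apply Continuous.mul
    · fun_prop
    · apply Complex.continuous_exp.comp
      apply Continuous.mul continuous_const
      apply Complex.continuous_ofReal.comp
      apply Real.continuousOn_log.comp_continuous (continuous_abs.comp ht)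
      intro v
      simp [abs_ne_zero, htne v]
  · have heq : (fun v : V2set => if 0 < (v : ℝ × ℂ × ℝ × ℝ).2.2.1 then (1:ℝ) else -1) =
        fun v : V2set => (v : ℝ × ℂ × ℝ × ℝ).2.2.1 / |(v : ℝ × ℂ × ℝ × ℝ).2.2.1| := by
      funext v
      rcases (htne v).lt_or_gt with h | h
      · simp [not_lt.mpr h.le, abs_of_neg h, div_neg, div_self h.ne]
      · simp [h, abs_of_pos h, div_self h.ne']
    rw [heq]
    exact ht.div (continuous_abs.comp ht) (fun v => abs_ne_zero.mpr (htne v))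

lemma q2_mem (v : V2set) : (q2 v).2 = 1 ∨ (q2 v).2 = -1 := by
  by_cases h : 0 < (v : ℝ × ℂ × ℝ × ℝ).2.2.1 <;> simp [q2, h]

lemma q2_surj (p : ℂ × ℝ) (hp : p.2 = 1 ∨ p.2 = -1) : ∃ v : V2set, q2 v = p := by
  obtain ⟨z, ε⟩ := p
  rcases hp with rfl | rfl
  · exact ⟨⟨(0, z, 1, 0), by simp [V2set]⟩, by simp [q2]⟩
  · exact ⟨⟨(0, z, -1, 0), by simp [V2set]⟩, by norm_num [q2]⟩

lemma q2_fib (v v' : V2set) : q2 v = q2 v' ↔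
    ∃ ra : ℝ × ℝ, lamAct ra (v : ℝ × ℂ × ℝ × ℝ) = (v' : ℝ × ℂ × ℝ × ℝ) := by
  obtain ⟨⟨x, w, t, s⟩, hs, ht⟩ := v
  obtain ⟨⟨x', w', t', s'⟩, hs', ht'⟩ := v'
  simp only [Set.mem_setOf_eq] at hs ht hs' ht'
  constructor
  · intro h
    simp only [q2, Prod.mk.injEq] at h
    obtain ⟨h1, h2⟩ := h
    have hsgn : 0 < t ↔ 0 < t' := by
      by_cases h : 0 < t <;> by_cases h' : 0 < t' <;> simp [h, h'] at h2 ⊢ <;> norm_num at h2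
    refine ⟨(x' - x, Real.log |t'| - Real.log |t|), ?_⟩
    simp only [lamAct, Prod.mk.injEq]
    refine ⟨by ring, ?_, ?_, by rw [hs, hs']; ring⟩
    · apply mul_right_cancel₀ (Complex.exp_ne_zero (Complex.I * (Real.log |t'| : ℝ)))
      rw [mul_assoc, ← Complex.exp_add]
      have harg : -((Real.log |t'| - Real.log |t| : ℝ) : ℂ) * Complex.I +
          Complex.I * ((Real.log |t'| : ℝ) : ℂ) = Complex.I * ((Real.log |t| : ℝ) : ℂ) := by
        push_cast; ring
      rw [harg]
      exact h1
    · rw [Real.exp_sub, Real.exp_log (abs_pos.mpr ht), Real.exp_log (abs_pos.mpr ht')]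
      rcases ht.lt_or_gt with h | h
      · have h' : t' < 0 :=
          lt_of_le_of_ne (not_lt.mp (fun hc => (not_lt.mpr h.le) (hsgn.mpr hc))) ht'
        rw [abs_of_neg h, abs_of_neg h']
        field_simp
      · have h' : 0 < t' := hsgn.mp h
        rw [abs_of_pos h, abs_of_pos h']
        field_simp
  · rintro ⟨⟨r, a⟩, h⟩
    simp only [lamAct, Prod.mk.injEq] at h
    obtain ⟨h1, h2, h3, h4⟩ := h
    have hexp := Real.exp_pos a
    simp only [q2, Prod.mk.injEq]
    constructor
    · rw [← h2, ← h3, abs_mul, abs_of_pos hexp,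
        Real.log_mul (abs_ne_zero.mpr ht) hexp.ne', Real.log_exp]
      rw [mul_assoc, ← Complex.exp_add]
      congr 1
      push_cast
      ring
    · subst h3
      have hiff : 0 < t * Real.exp a ↔ 0 < t :=
        ⟨fun h => by nlinarith, fun h => mul_pos h hexp⟩
      simp only [hiff]

/-- `q₂` is continuous, surjective onto `ℂ × {−1,1}`, and its fibers are exactly the
`λ`-orbits in `V₂`; consequently the leaf space `V₂/ℝ²` is in bijection with
`ℂ × {−1,1} ≅ ℝ² ⊔ ℝ²`. -/
theorem q2_classifies_orbits :
    Continuous q2 ∧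
    Set.range q2 = {p : ℂ × ℝ | p.2 = 1 ∨ p.2 = -1} ∧
    (∀ v v' : V2set, q2 v = q2 v' ↔
      ∃ ra : ℝ × ℝ, lamAct ra (v : ℝ × ℂ × ℝ × ℝ) = (v' : ℝ × ℂ × ℝ × ℝ)) ∧
    ∃ e : Quot (fun v v' : V2set =>
          ∃ ra : ℝ × ℝ, lamAct ra (v : ℝ × ℂ × ℝ × ℝ) = (v' : ℝ × ℂ × ℝ × ℝ)) ≃
        {p : ℂ × ℝ // p.2 = 1 ∨ p.2 = -1},
      ∀ v : V2set, (e (Quot.mk _ v) : ℂ × ℝ) = q2 v := by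
  have hrange : Set.range q2 = {p : ℂ × ℝ | p.2 = 1 ∨ p.2 = -1} := by
    ext p
    constructor
    · rintro ⟨v, rfl⟩
      exact q2_mem v
    · exact fun hp => q2_surj p hp
  refine ⟨q2_cont, hrange, q2_fib, ?_⟩
  have hbij : Function.Bijective
      (Quot.lift (fun v : V2set => (⟨q2 v, q2_mem v⟩ : {p : ℂ × ℝ // p.2 = 1 ∨ p.2 = -1}))
        (fun v v' h => Subtype.ext ((q2_fib v v').mpr h))) := by
    constructor
    · rintro q q' hq
      induction q using Quot.ind with | _ v =>
      induction q' using Quot.ind with | _ v' =>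
      exact Quot.sound ((q2_fib v v').mp (congrArg Subtype.val hq))
    · rintro ⟨p, hp⟩
      obtain ⟨v, hv⟩ := q2_surj p hp
      exact ⟨Quot.mk _ v, Subtype.ext hv⟩
  exact ⟨Equiv.ofBijective _ hbij, fun v => by rw [Equiv.ofBijective_apply]⟩
end
end

section
/- Let q ∈ M₂(ℂ) be a self-adjoint idempotent with trace 1, and define f : ℝ → M₂(ℂ) by f(z) = exp(2πi·(z/√(1+z²))·q). Then f(z) is unitary (in particular invertible) for every z ∈ ℝ, f is differentiable, and the winding numbers over the two half-lines both equal 1: (1/(2πi))·∫₀^{∞} trace(f′(z)·f(z)⁻¹) dz = 1 and (1/(2πi))·∫_{−∞}^{0} trace(f′(z)·f(z)⁻¹) dz = 1. -/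
noncomputable section

open Matrix MeasureTheory
open scoped Real

attribute [local instance] Matrix.linftyOpNormedRing Matrix.linftyOpNormedAlgebra

/-- `f(z) = exp(2πi·(z/√(1+z²))·q)`, defined via the matrix exponential. -/
def fUnit (q : Matrix (Fin 2) (Fin 2) ℂ) (z : ℝ) : Matrix (Fin 2) (Fin 2) ℂ :=
  NormedSpace.exp
    ((2 * (Real.pi : ℂ) * Complex.I * ((z : ℂ) / ((Real.sqrt (1 + z ^ 2) : ℝ) : ℂ))) • q)

def gR (z : ℝ) : ℝ := z / Real.sqrt (1 + z ^ 2)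
def gD (z : ℝ) : ℝ := 1 / Real.sqrt (1 + z ^ 2) * (1 / (1 + z ^ 2))

lemma gR_eq (z : ℝ) : gR z = Real.sin (Real.arctan z) := (Real.sin_arctan z).symm

lemma hasDerivAt_gR (z : ℝ) : HasDerivAt gR (gD z) z := by
  have h1 := Real.hasDerivAt_arctan z
  have h2 := Real.hasDerivAt_sin (Real.arctan z)
  have := h2.comp z h1
  simp only [Real.cos_arctan] at this
  have h3 : Real.sin ∘ Real.arctan = gR := funext fun x => (gR_eq x).symm
  rw [h3] at this
  simpa [gD, Function.comp] using this

lemma gD_nonneg (z : ℝ) : 0 ≤ gD z := by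
  have : (0:ℝ) < 1 + z ^ 2 := by positivity
  unfold gD; positivity

lemma gD_cont : Continuous gD := by
  have h : ∀ z : ℝ, (0:ℝ) < 1 + z ^ 2 := fun z => by positivity
  apply Continuous.mul
  · exact (continuous_const.div (Real.continuous_sqrt.comp (by continuity))
      (fun z => by positivity))
  · exact continuous_const.div (by continuity) (fun z => (h z).ne')

lemma gD_integrable : MeasureTheory.Integrable gD := by
  refine MeasureTheory.Integrable.mono' integrable_inv_one_add_sq
    gD_cont.aestronglyMeasurable (Filter.Eventually.of_forall fun z => ?_)
  have h1 : (0:ℝ) < 1 + z ^ 2 := by positivity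
  have h2 : (1:ℝ) ≤ Real.sqrt (1 + z ^ 2) := by
    have := Real.sqrt_le_sqrt (show (1:ℝ) ≤ 1 + z ^ 2 by nlinarith)
    rwa [Real.sqrt_one] at this
  rw [Real.norm_of_nonneg (gD_nonneg z)]
  unfold gD
  rw [one_div, one_div, ← mul_inv, ← one_div, ← one_div (1 + z ^ 2)]
  exact one_div_le_one_div_of_le h1 (by nlinarith)

lemma gR_tendsto_top : Filter.Tendsto gR Filter.atTop (nhds 1) := by
  have h := Real.tendsto_arctan_atTop
  have h2 : Filter.Tendsto gR Filter.atTop (nhds (Real.sin (π/2))) := by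
    refine (Real.continuous_sin.tendsto _).comp
      (tendsto_nhds_of_tendsto_nhdsWithin h) |>.congr fun x => (gR_eq x).symm
  simpa using h2

lemma gR_tendsto_bot : Filter.Tendsto gR Filter.atBot (nhds (-1)) := by
  have h := Real.tendsto_arctan_atBot
  have h2 : Filter.Tendsto gR Filter.atBot (nhds (Real.sin (-(π/2)))) := by
    refine (Real.continuous_sin.tendsto _).comp
      (tendsto_nhds_of_tendsto_nhdsWithin h) |>.congr fun x => (gR_eq x).symm
  simpa using h2

lemma gR_zero : gR 0 = 0 := by simp [gR]

lemma int_Ioi : ∫ z in Set.Ioi (0:ℝ), gD z = 1 := by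
  rw [MeasureTheory.integral_Ioi_of_hasDerivAt_of_tendsto'
    (fun x _ => hasDerivAt_gR x) gD_integrable.integrableOn gR_tendsto_top, gR_zero, sub_zero]

lemma int_Iio : ∫ z in Set.Iio (0:ℝ), gD z = 1 := by
  rw [← MeasureTheory.integral_Iic_eq_integral_Iio,
    MeasureTheory.integral_Iic_of_hasDerivAt_of_tendsto'
    (fun x _ => hasDerivAt_gR x) gD_integrable.integrableOn gR_tendsto_bot, gR_zero]
  ring

def cC (z : ℝ) : ℂ := 2 * (Real.pi : ℂ) * Complex.I * (gR z : ℂ)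

lemma fUnit_eq (q : Matrix (Fin 2) (Fin 2) ℂ) (z : ℝ) :
    fUnit q z = NormedSpace.exp (cC z • q) := by
  unfold fUnit cC gR
  push_cast
  rfl

lemma star_cq (q : Matrix (Fin 2) (Fin 2) ℂ) (hq_sa : qᴴ = q) (z : ℝ) :
    star (cC z • q) = -(cC z • q) := by
  have hc : (starRingEnd ℂ) (cC z) = -cC z := by
    unfold cC
    simp only [_root_.map_mul, Complex.conj_I, Complex.conj_ofReal, map_ofNat]
    ring
  rw [star_smul, Matrix.star_eq_conjTranspose, hq_sa, Complex.star_def, hc, neg_smul]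

lemma exp_mul_exp_neg (a : Matrix (Fin 2) (Fin 2) ℂ) :
    NormedSpace.exp a * NormedSpace.exp (-a) = 1 := by
  rw [← Matrix.exp_add_of_commute a (-a) (Commute.refl a).neg_right, add_neg_cancel,
    NormedSpace.exp_zero]


/-- For a self-adjoint idempotent `q ∈ M₂(ℂ)` with trace `1` and
`f(z) = exp(2πi·(z/√(1+z²))·q)`: every `f(z)` is unitary (in particular invertible),
`f` is differentiable, and the winding numbers over the two half-lines both equal `1`:
`(1/2πi)·∫₀^∞ tr(f′(z)f(z)⁻¹) dz = 1` and `(1/2πi)·∫_{−∞}^0 tr(f′(z)f(z)⁻¹) dz = 1`. -/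
theorem fUnit_unitary_winding_numbers
    (q : Matrix (Fin 2) (Fin 2) ℂ) (hq_sa : qᴴ = q) (hq_idem : q * q = q)
    (hq_tr : Matrix.trace q = 1) :
    (∀ z : ℝ, fUnit q z ∈ Matrix.unitaryGroup (Fin 2) ℂ ∧ IsUnit (fUnit q z)) ∧
    ∃ f' : ℝ → Matrix (Fin 2) (Fin 2) ℂ,
      (∀ z : ℝ, HasDerivAt (fUnit q) (f' z) z) ∧
      (1 / (2 * (Real.pi : ℂ) * Complex.I)) *
          ∫ z in Set.Ioi (0 : ℝ), Matrix.trace (f' z * (fUnit q z)⁻¹) = 1 ∧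
      (1 / (2 * (Real.pi : ℂ) * Complex.I)) *
          ∫ z in Set.Iio (0 : ℝ), Matrix.trace (f' z * (fUnit q z)⁻¹) = 1 := by
  have key : ∀ z : ℝ, fUnit q z * NormedSpace.exp (-(cC z • q)) = 1 := fun z => by
    rw [fUnit_eq]; exact exp_mul_exp_neg _
  have key' : ∀ z : ℝ, NormedSpace.exp (-(cC z • q)) * fUnit q z = 1 := fun z => by
    rw [fUnit_eq]
    have := exp_mul_exp_neg (-(cC z • q))
    rwa [neg_neg] at this
  have hstar : ∀ z : ℝ, star (fUnit q z) = NormedSpace.exp (-(cC z • q)) := fun z => by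
    rw [fUnit_eq, NormedSpace.star_exp, star_cq q hq_sa]
  have hunit : ∀ z : ℝ, fUnit q z ∈ Matrix.unitaryGroup (Fin 2) ℂ := fun z => by
    rw [Matrix.mem_unitaryGroup_iff, hstar]
    exact key z
  have hinv : ∀ z : ℝ, (fUnit q z)⁻¹ = NormedSpace.exp (-(cC z • q)) := fun z =>
    Matrix.inv_eq_right_inv (key z)
  -- derivative
  set f' : ℝ → Matrix (Fin 2) (Fin 2) ℂ :=
    fun z => (2 * (Real.pi : ℂ) * Complex.I * (gD z : ℂ)) • (q * fUnit q z) with hf'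
  have hderiv : ∀ z : ℝ, HasDerivAt (fUnit q) (f' z) z := by
    intro z
    have hc : HasDerivAt cC (2 * (Real.pi : ℂ) * Complex.I * (gD z : ℂ)) z := by
      have h1 : HasDerivAt (fun z : ℝ => ((gR z : ℝ) : ℂ)) ((gD z : ℂ)) z :=
        (hasDerivAt_gR z).ofReal_comp
      exact h1.const_mul (2 * (Real.pi : ℂ) * Complex.I)
    have h2 : HasDerivAt (fun w : ℂ => NormedSpace.exp (w • q)) (q * NormedSpace.exp (cC z • q))
        (cC z) := hasDerivAt_exp_smul_const' q (cC z)
    have h3 := HasDerivAt.scomp z h2 hc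
    have h4 : (fun w : ℂ => NormedSpace.exp (w • q)) ∘ cC = fUnit q := by
      funext x; rw [Function.comp, fUnit_eq]
    rw [h4] at h3
    show HasDerivAt (fUnit q)
      ((2 * (Real.pi : ℂ) * Complex.I * (gD z : ℂ)) • (q * fUnit q z)) z
    rw [fUnit_eq q z]
    exact h3
  refine ⟨fun z => ⟨hunit z, ⟨⟨fUnit q z, NormedSpace.exp (-(cC z • q)), key z, key' z⟩, rfl⟩⟩, f', hderiv, ?_, ?_⟩ <;>
  · have htr : ∀ z : ℝ, Matrix.trace (f' z * (fUnit q z)⁻¹)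
        = 2 * (Real.pi : ℂ) * Complex.I * (gD z : ℂ) := by
      intro z
      rw [hinv, hf', smul_mul_assoc, mul_assoc q, fUnit_eq, exp_mul_exp_neg, mul_one,
        Matrix.trace_smul, hq_tr, smul_eq_mul, mul_one]
    rw [MeasureTheory.integral_congr_ae (Filter.Eventually.of_forall fun z => htr z)]
    rw [MeasureTheory.integral_const_mul]
    rw [show ∀ s : Set ℝ, (∫ a in s, ((gD a : ℂ))) = ((∫ a in s, gD a : ℝ) : ℂ) from
      fun s => integral_ofReal]
    first
    | rw [int_Ioi]
    | rw [int_Iio]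
    norm_num
    have hπ : (Real.pi : ℂ) ≠ 0 := Complex.ofReal_ne_zero.mpr Real.pi_ne_zero
    have hI := Complex.I_ne_zero
    field_simp
    rw [Complex.I_sq]
    ring
end
end
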